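/- Let g : ℝⁿ → ℝᵐ satisfy g(0) = 0, let g be differentiable on the closed ball B = {x : ‖x‖ ≤ ρ} with derivative L-Lipschitz on B in the operator norm (‖g'(x) − g'(x')‖ ≤ L‖x − x'‖ for x, x' ∈ B), and suppose there is μ > 0 with ‖g'(x)ᵀh‖ ≥ μ‖h‖ for all x ∈ B and all h ∈ ℝᵐ. If ‖y‖ < μρ, then there exists x* with g(x*) = y and ‖x*‖ ≤ ‖y‖/μ. -/

import Mathlib

open Metric Set Filter Topology ContinuousLinearMap

local notation "⟪" x ", " y "⟫" => @inner ℝ _ _ x y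

theorem aux_deriv {f : ℝ → ℝ} {d : ℝ} (hf : HasDerivAt f d 0) (h0 : f 0 = 0)
    (h : ∀ᶠ t in 𝓝[>] (0:ℝ), 0 ≤ f t) : 0 ≤ d := by
  rw [hasDerivAt_iff_tendsto_slope] at hf
  have hf' := hf.mono_left (nhdsWithin_mono 0 (fun t (ht : t ∈ Set.Ioi (0:ℝ)) =>
    (ne_of_gt ht : t ≠ 0)))
  refine ge_of_tendsto hf' ?_
  filter_upwards [h, self_mem_nhdsWithin] with t ht (ht0 : (0:ℝ) < t)
  rw [slope_def_field, h0, sub_zero, sub_zero]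
  exact div_nonneg ht ht0.le

set_option maxHeartbeats 1000000 in
/-- Core lemma: for any `0 < ε < μ` with `‖y‖ < ε * ρ`, there is a solution of
`g x = y` in the ball with `‖x‖ ≤ ‖y‖ / ε`. -/
theorem aux_core {n m : ℕ} (ρ ε μ : ℝ) (hρ : 0 < ρ) (hε : 0 < ε) (hεμ : ε < μ)
    (g : EuclideanSpace ℝ (Fin n) → EuclideanSpace ℝ (Fin m))
    (g' : EuclideanSpace ℝ (Fin n) →
      (EuclideanSpace ℝ (Fin n) →L[ℝ] EuclideanSpace ℝ (Fin m)))
    (hg0 : g 0 = 0)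
    (hdiff : ∀ x ∈ Metric.closedBall (0 : EuclideanSpace ℝ (Fin n)) ρ,
      HasFDerivWithinAt g (g' x) (Metric.closedBall 0 ρ) x)
    (hμB : ∀ x ∈ Metric.closedBall (0 : EuclideanSpace ℝ (Fin n)) ρ,
      ∀ h : EuclideanSpace ℝ (Fin m),
        μ * ‖h‖ ≤ ‖ContinuousLinearMap.adjoint (g' x) h‖)
    (y : EuclideanSpace ℝ (Fin m)) (hy : ‖y‖ < ε * ρ) :
    ∃ x ∈ Metric.closedBall (0 : EuclideanSpace ℝ (Fin n)) ρ,
      g x = y ∧ ‖x‖ ≤ ‖y‖ / ε := by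
  set B := Metric.closedBall (0 : EuclideanSpace ℝ (Fin n)) ρ with hB
  have h0B : (0 : EuclideanSpace ℝ (Fin n)) ∈ B := by simp [hB, hρ.le]
  have hgc : ContinuousOn g B := fun x hx => (hdiff x hx).continuousWithinAt
  have hFcont : ContinuousOn (fun x => ‖g x - y‖ + ε * ‖x‖) B := by
    exact ((hgc.sub continuousOn_const).norm).add
      (continuousOn_const.mul continuous_norm.continuousOn)
  obtain ⟨x₀, hx₀B, hmin⟩ := (isCompact_closedBall (0 : EuclideanSpace ℝ (Fin n)) ρ).exists_isMinOn
    ⟨0, h0B⟩ hFcont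
  have hF0 : ‖g x₀ - y‖ + ε * ‖x₀‖ ≤ ‖y‖ := by
    have := hmin h0B
    simpa [hg0] using this
  have hxle : ‖x₀‖ ≤ ‖y‖ / ε := by
    rw [le_div_iff₀ hε]
    have : (0:ℝ) ≤ ‖g x₀ - y‖ := norm_nonneg _
    linarith [mul_comm ε ‖x₀‖]
  refine ⟨x₀, hx₀B, ?_, hxle⟩
  by_contra hne
  have ha : g x₀ - y ≠ 0 := sub_ne_zero.mpr hne
  set a := g x₀ - y with haa
  have hna : (0:ℝ) < ‖a‖ := norm_pos_iff.mpr ha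
  set A := g' x₀ with hA
  set u : EuclideanSpace ℝ (Fin m) := (‖a‖⁻¹ : ℝ) • a with hu
  have hu1 : ‖u‖ = 1 := by
    rw [hu, norm_smul, norm_inv, norm_norm, inv_mul_cancel₀ hna.ne']
  set v : EuclideanSpace ℝ (Fin n) := -(ContinuousLinearMap.adjoint A u) with hv
  have hμv : μ ≤ ‖v‖ := by
    have := hμB x₀ hx₀B u
    rw [hu1, mul_one] at this
    simpa [hv] using this
  have hv0 : (0:ℝ) < ‖v‖ := lt_of_lt_of_le (hε.trans hεμ) hμv
  -- x₀ is interior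
  have hxlt : ‖x₀‖ < ρ := lt_of_le_of_lt hxle (by rwa [div_lt_iff₀ hε, mul_comm])
  have hnhds : B ∈ 𝓝 x₀ := by
    apply Metric.closedBall_mem_nhds_of_mem
    simpa [dist_zero_right] using hxlt
  have hfd : HasFDerivAt g A x₀ := (hdiff x₀ hx₀B).hasFDerivAt hnhds
  -- the curve and derivative computations
  have hc : HasDerivAt (fun t : ℝ => x₀ + t • v) v 0 := by
    simpa using ((hasDerivAt_id (0:ℝ)).smul_const v).const_add x₀
  have hfd' : HasFDerivAt g A (x₀ + (0:ℝ) • v) := by simpa using hfd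
  have hw : HasDerivAt (fun t : ℝ => g (x₀ + t • v) - y) (A v) 0 :=
    (hfd'.comp_hasDerivAt 0 hc).sub_const y
  have hw0 : g (x₀ + (0:ℝ) • v) - y = a := by simp [haa]
  have hφ : HasDerivAt (fun t : ℝ => ⟪g (x₀ + t • v) - y, g (x₀ + t • v) - y⟫)
      (⟪a, A v⟫ + ⟪A v, a⟫) 0 := by
    have := hw.inner ℝ hw
    rwa [hw0] at this
  -- inner product value
  have haAv : ⟪a, A v⟫ = -(‖a‖ * ‖v‖ ^ 2) := by
    have h1 : ⟪a, A v⟫ = ⟪ContinuousLinearMap.adjoint A a, v⟫ :=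
      (ContinuousLinearMap.adjoint_inner_left A v a).symm
    have ha' : a = ‖a‖ • u := by
      rw [hu, smul_smul, mul_inv_cancel₀ hna.ne', one_smul]
    have h2 : ContinuousLinearMap.adjoint A a = ‖a‖ • (ContinuousLinearMap.adjoint A u) := by
      rw [hu, map_smul, smul_smul, mul_inv_cancel₀ hna.ne', one_smul]
    rw [h1, h2, real_inner_smul_left]
    have : (ContinuousLinearMap.adjoint A) u = -v := by rw [hv, neg_neg]
    rw [this, inner_neg_left, real_inner_self_eq_norm_sq]
    ring
  have hφ' : HasDerivAt (fun t : ℝ => ⟪g (x₀ + t • v) - y, g (x₀ + t • v) - y⟫)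
      (-(2 * (‖a‖ * ‖v‖ ^ 2))) 0 := by
    have hsym : ⟪A v, a⟫ = ⟪a, A v⟫ := real_inner_comm _ _
    convert hφ using 1
    rw [hsym, haAv]; ring
  have hq : HasDerivAt (fun t : ℝ => (‖a‖ - ε * ‖v‖ * t) ^ 2) (-(2 * (‖a‖ * (ε * ‖v‖)))) 0 := by
    have h1 : HasDerivAt (fun t : ℝ => ‖a‖ - ε * ‖v‖ * t) (-(ε * ‖v‖)) 0 := by
      simpa using ((hasDerivAt_id (0:ℝ)).const_mul (ε * ‖v‖)).const_sub ‖a‖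
    have := h1.fun_pow 2
    refine this.congr_deriv ?_
    simp only [mul_zero, sub_zero, Nat.cast_ofNat, Nat.reduceSub, pow_one]; ring
  -- eventual inequality q ≤ φ on the right of 0
  set t₀ : ℝ := min ((ρ - ‖x₀‖) / ‖v‖) (‖a‖ / (ε * ‖v‖)) with ht₀
  have ht₀pos : 0 < t₀ := by
    apply lt_min
    · exact div_pos (by linarith) hv0
    · exact div_pos hna (mul_pos hε hv0)
  have hev : ∀ᶠ t in 𝓝[>] (0:ℝ),
      (‖a‖ - ε * ‖v‖ * t) ^ 2 ≤ ⟪g (x₀ + t • v) - y, g (x₀ + t • v) - y⟫ := by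
    filter_upwards [Ioo_mem_nhdsGT ht₀pos] with t ht
    obtain ⟨ht0, htt⟩ := ht
    have htv1 : t * ‖v‖ ≤ ρ - ‖x₀‖ := by
      rw [← le_div_iff₀ hv0]
      exact le_of_lt (lt_of_lt_of_le htt (min_le_left _ _))
    have htv2 : ε * ‖v‖ * t ≤ ‖a‖ := by
      have := lt_of_lt_of_le htt (min_le_right _ _)
      rw [lt_div_iff₀ (mul_pos hε hv0)] at this
      linarith [this]
    have hmem : x₀ + t • v ∈ B := by
      rw [hB, Metric.mem_closedBall, dist_zero_right]
      calc ‖x₀ + t • v‖ ≤ ‖x₀‖ + ‖t • v‖ := norm_add_le _ _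
        _ = ‖x₀‖ + t * ‖v‖ := by rw [norm_smul, Real.norm_of_nonneg ht0.le]
        _ ≤ ρ := by linarith
    have hm : ‖g x₀ - y‖ + ε * ‖x₀‖ ≤ ‖g (x₀ + t • v) - y‖ + ε * ‖x₀ + t • v‖ := hmin hmem
    have hnb : ‖x₀ + t • v‖ ≤ ‖x₀‖ + t * ‖v‖ := by
      calc ‖x₀ + t • v‖ ≤ ‖x₀‖ + ‖t • v‖ := norm_add_le _ _
        _ = ‖x₀‖ + t * ‖v‖ := by rw [norm_smul, Real.norm_of_nonneg ht0.le]
    have hnb' : ε * ‖x₀ + t • v‖ ≤ ε * (‖x₀‖ + t * ‖v‖) :=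
      mul_le_mul_of_nonneg_left hnb hε.le
    have hlow : ‖a‖ - ε * ‖v‖ * t ≤ ‖g (x₀ + t • v) - y‖ := by
      have haa' : ‖a‖ = ‖g x₀ - y‖ := by rw [haa]
      nlinarith [hm, hnb', hε]
    have hlow0 : (0:ℝ) ≤ ‖a‖ - ε * ‖v‖ * t := by linarith
    have : (‖a‖ - ε * ‖v‖ * t) ^ 2 ≤ ‖g (x₀ + t • v) - y‖ ^ 2 := by
      exact pow_le_pow_left₀ hlow0 hlow 2
    rwa [← real_inner_self_eq_norm_sq] at this
  -- one-sided derivative comparison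
  have hψ0 : (⟪g (x₀ + (0:ℝ) • v) - y, g (x₀ + (0:ℝ) • v) - y⟫
      - (‖a‖ - ε * ‖v‖ * 0) ^ 2 : ℝ) = 0 := by
    rw [hw0, real_inner_self_eq_norm_sq]; ring
  have hder : 0 ≤ -(2 * (‖a‖ * ‖v‖ ^ 2)) - -(2 * (‖a‖ * (ε * ‖v‖))) := by
    refine aux_deriv (hφ'.sub hq) hψ0 ?_
    filter_upwards [hev] with t ht
    show (0:ℝ) ≤ ⟪g (x₀ + t • v) - y, g (x₀ + t • v) - y⟫ - (‖a‖ - ε * ‖v‖ * t) ^ 2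
    linarith
  nlinarith [mul_pos hna hv0, hμv, hεμ, hna, hv0]

/-- solvability of an underdetermined equation `g x = y` on a ball. -/
theorem stmt1 {n m : ℕ} (ρ L μ : ℝ) (hρ : 0 < ρ) (hL : 0 < L) (hμ : 0 < μ)
    (g : EuclideanSpace ℝ (Fin n) → EuclideanSpace ℝ (Fin m))
    (g' : EuclideanSpace ℝ (Fin n) →
      (EuclideanSpace ℝ (Fin n) →L[ℝ] EuclideanSpace ℝ (Fin m)))
    (hg0 : g 0 = 0)
    (hdiff : ∀ x ∈ Metric.closedBall (0 : EuclideanSpace ℝ (Fin n)) ρ,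
      HasFDerivWithinAt g (g' x) (Metric.closedBall 0 ρ) x)
    (hLip : ∀ x ∈ Metric.closedBall (0 : EuclideanSpace ℝ (Fin n)) ρ,
      ∀ x' ∈ Metric.closedBall (0 : EuclideanSpace ℝ (Fin n)) ρ,
        ‖g' x - g' x'‖ ≤ L * ‖x - x'‖)
    (hμB : ∀ x ∈ Metric.closedBall (0 : EuclideanSpace ℝ (Fin n)) ρ,
      ∀ h : EuclideanSpace ℝ (Fin m),
        μ * ‖h‖ ≤ ‖ContinuousLinearMap.adjoint (g' x) h‖)
    (y : EuclideanSpace ℝ (Fin m)) (hy : ‖y‖ < μ * ρ) :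
    ∃ x : EuclideanSpace ℝ (Fin n), g x = y ∧ ‖x‖ ≤ ‖y‖ / μ := by
  set B := Metric.closedBall (0 : EuclideanSpace ℝ (Fin n)) ρ with hB
  have hgc : ContinuousOn g B := fun x hx => (hdiff x hx).continuousWithinAt
  set c : ℝ := ‖y‖ / ρ with hc
  have hc0 : 0 ≤ c := div_nonneg (norm_nonneg _) hρ.le
  have hcμ : c < μ := (div_lt_iff₀ hρ).mpr hy
  -- solutions for a given ε
  have core : ∀ ε : ℝ, c < ε → ε < μ → ∃ x ∈ B, g x = y ∧ ‖x‖ ≤ ‖y‖ / ε := by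
    intro ε hcε hεμ
    have hε : 0 < ε := lt_of_le_of_lt hc0 hcε
    have hyε : ‖y‖ < ε * ρ := (div_lt_iff₀ hρ).mp hcε
    exact aux_core ρ ε μ hρ hε hεμ g g' hg0 hdiff hμB y hyε
  -- the solution set
  set S : Set (EuclideanSpace ℝ (Fin n)) := B ∩ g ⁻¹' {y} with hS
  have hSclosed : IsClosed S :=
    hgc.preimage_isClosed_of_isClosed Metric.isClosed_closedBall isClosed_singleton
  have hScomp : IsCompact S :=
    (isCompact_closedBall _ _).of_isClosed_subset hSclosed Set.inter_subset_left
  have hSne : S.Nonempty := by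
    obtain ⟨x, hxB, hgx, -⟩ := core ((c + μ) / 2) (by linarith) (by linarith)
    exact ⟨x, hxB, by simpa using hgx⟩
  obtain ⟨xbar, hxbarS, hmin⟩ := hScomp.exists_isMinOn hSne continuous_norm.continuousOn
  refine ⟨xbar, by simpa using hxbarS.2, ?_⟩
  rw [le_div_iff₀ hμ]
  have hkey : ∀ ε ∈ Set.Ioo c μ, ‖xbar‖ * ε ≤ ‖y‖ := by
    intro ε ⟨hcε, hεμ⟩
    have hε : 0 < ε := lt_of_le_of_lt hc0 hcε
    obtain ⟨x, hxB, hgx, hxn⟩ := core ε hcε hεμ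
    have hxbarx : ‖xbar‖ ≤ ‖x‖ := hmin ⟨hxB, by simpa using hgx⟩
    have : ‖xbar‖ ≤ ‖y‖ / ε := hxbarx.trans hxn
    rwa [le_div_iff₀ hε] at this
  have htend : Tendsto (fun ε : ℝ => ‖xbar‖ * ε) (𝓝[<] μ) (𝓝 (‖xbar‖ * μ)) :=
    ((continuous_const.mul continuous_id).tendsto μ).mono_left nhdsWithin_le_nhds
  refine le_of_tendsto htend ?_
  filter_upwards [Ioo_mem_nhdsLT hcμ] with ε hε
  exact hkey ε hε
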